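/- Let f be a natural number, let U be a nonempty finite multiset of real numbers with card U ≥ 2f + 1, and let B₁, B₂ be finite multisets of real numbers each of cardinality at most f. Then |mean(trim_f(U + B₁)) − mean(trim_f(U + B₂))| ≤ max U − min U. In particular, for every ε > 0, if max U − min U ≤ ε then the trimmed means computed by any two correct processes from U + B₁ and U + B₂ are within ε of each other. (This is the quantitative content of the paper's claim that once ε-Agreement is achieved among the currently non-faulty processes, it is preserved among the possibly different non-faulty processes of later rounds.) -/

import Mathlib

open Multiset

/-- The minimum element of a (nonempty, finite) multiset of reals. -/
noncomputable def mmin (V : Multiset ℝ) : ℝ := sInf {x : ℝ | x ∈ V}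

/-- The maximum element of a (nonempty, finite) multiset of reals. -/
noncomputable def mmax (V : Multiset ℝ) : ℝ := sSup {x : ℝ | x ∈ V}

/-- The multiset obtained from `N` by deleting its `t` smallest and `t` largest
elements (counted with multiplicity). -/
noncomputable def trim (t : ℕ) (N : Multiset ℝ) : Multiset ℝ :=
  (((N.sort (· ≤ ·)).drop t).take (Multiset.card N - 2 * t) : List ℝ)

/-- The arithmetic mean of a (nonempty) finite multiset of reals. -/
noncomputable def mean (R : Multiset ℝ) : ℝ := R.sum / (Multiset.card R : ℝ)

lemma setU_fin (U : Multiset ℝ) : {x : ℝ | x ∈ U}.Finite := by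
  have : {x : ℝ | x ∈ U} = ↑U.toFinset := by
    ext x; simp [Multiset.mem_toFinset]
  rw [this]; exact U.toFinset.finite_toSet

lemma setU_ne (U : Multiset ℝ) (hU : U ≠ 0) : {x : ℝ | x ∈ U}.Nonempty := by
  obtain ⟨x, hx⟩ := Multiset.exists_mem_of_ne_zero hU
  exact ⟨x, hx⟩

lemma mmin_le {U : Multiset ℝ} {x : ℝ} (hx : x ∈ U) : mmin U ≤ x :=
  csInf_le (setU_fin U).bddBelow hx

lemma le_mmax {U : Multiset ℝ} {x : ℝ} (hx : x ∈ U) : x ≤ mmax U :=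
  le_csSup (setU_fin U).bddAbove hx

lemma trim_bounds (f : ℕ) (U B : Multiset ℝ) (hU : U ≠ 0)
    (hUc : 2 * f + 1 ≤ Multiset.card U) (hB : Multiset.card B ≤ f) :
    ∀ x ∈ trim f (U + B), mmin U ≤ x ∧ x ≤ mmax U := by
  intro x hx
  set L := (U + B).sort (· ≤ ·) with hL
  have hsorted : L.Pairwise (· ≤ ·) := Multiset.pairwise_sort _ _
  have hpair := List.pairwise_iff_getElem.1 hsorted
  have hlen : L.length = Multiset.card U + Multiset.card B := by
    rw [hL]
    simp [Multiset.length_sort]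
  have hmem : x ∈ (L.drop f).take (Multiset.card (U + B) - 2 * f) := by
    simpa [trim, hL] using hx
  obtain ⟨i, hi, hxi⟩ := List.getElem_of_mem hmem
  have hilen : i < (L.drop f).length := by
    have := hi; rw [List.length_take] at this; omega
  have hik : i < Multiset.card (U + B) - 2 * f := by
    have := hi
    rw [List.length_take] at this
    omega
  have hxL : L[f + i]'(by simp at hilen ⊢; omega) = x := by
    rw [← hxi, List.getElem_take, List.getElem_drop]
  have hfi : f + i < L.length := by simp at hilen; omega
  have hfik : f + i < L.length - f := by
    simp only [Multiset.card_add] at hik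
    omega
  -- counting helper
  have hcount : ∀ p : ℝ → Prop, ∀ (_ : DecidablePred p), (∀ y ∈ U, ¬ p y) →
      List.countP (fun b => decide (p b)) L ≤ f := by
    intro p hp hnp
    have : Multiset.countP p ((L : Multiset ℝ)) = List.countP (fun b => decide (p b)) L :=
      Multiset.coe_countP p L
    rw [← this, hL, Multiset.sort_eq, Multiset.countP_add]
    have h1 : Multiset.countP p U = 0 := Multiset.countP_eq_zero.2 hnp
    have h2 : Multiset.countP p B ≤ Multiset.card B := Multiset.countP_le_card p B
    omega
  constructor
  · by_contra hlt
    push_neg at hlt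
    -- x < mmin U; the first f+i+1 elements are all < mmin U
    have hall : ∀ y ∈ L.take (f + i + 1), y < mmin U := by
      intro y hy
      obtain ⟨j, hj, hyj⟩ := List.getElem_of_mem hy
      have hj' : j < f + i + 1 := by
        have := hj; rw [List.length_take] at this; omega
      rw [List.getElem_take] at hyj
      rcases Nat.lt_or_ge j (f + i) with h | h
      · have := hpair j (f + i) (by omega) hfi h
        rw [hyj, hxL] at this
        exact lt_of_le_of_lt this hlt
      · have : j = f + i := by omega
        subst this
        rw [hxL] at hyj
        rw [← hyj]; exact hlt
    have hc1 : List.countP (fun b => decide (b < mmin U)) (L.take (f + i + 1)) =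
        (L.take (f + i + 1)).length := by
      rw [List.countP_eq_length]
      intro a ha
      simpa using hall a ha
    have hc2 : List.countP (fun b => decide (b < mmin U)) (L.take (f + i + 1)) ≤
        List.countP (fun b => decide (b < mmin U)) L :=
      (List.take_sublist _ _).countP_le
    have hc3 : List.countP (fun b => decide (b < mmin U)) L ≤ f :=
      hcount (fun b => b < mmin U) (fun _ => inferInstance)
        (fun y hy => not_lt.2 (mmin_le hy))
    have hlen' : (L.take (f + i + 1)).length = f + i + 1 := by
      rw [List.length_take]; omega
    omega
  · by_contra hlt
    push_neg at hlt
    -- mmax U < x; the elements from index f+i onward are all > mmax U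
    have hall : ∀ y ∈ L.drop (f + i), mmax U < y := by
      intro y hy
      obtain ⟨j, hj, hyj⟩ := List.getElem_of_mem hy
      rw [List.getElem_drop] at hyj
      rcases Nat.eq_zero_or_pos j with h | h
      · subst h
        simp only [Nat.add_zero] at hyj
        rw [hxL] at hyj; rw [← hyj]; exact hlt
      · have hjlen : f + i + j < L.length := by
          have := hj; rw [List.length_drop] at this; omega
        have := hpair (f + i) (f + i + j) hfi hjlen (by omega)
        rw [hxL, hyj] at this
        exact lt_of_lt_of_le hlt this
    have hc1 : List.countP (fun b => decide (mmax U < b)) (L.drop (f + i)) =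
        (L.drop (f + i)).length := by
      rw [List.countP_eq_length]
      intro a ha
      simpa using hall a ha
    have hc2 : List.countP (fun b => decide (mmax U < b)) (L.drop (f + i)) ≤
        List.countP (fun b => decide (mmax U < b)) L :=
      (List.drop_sublist _ _).countP_le
    have hc3 : List.countP (fun b => decide (mmax U < b)) L ≤ f :=
      hcount (fun b => mmax U < b) (fun _ => inferInstance)
        (fun y hy => not_lt.2 (le_mmax hy))
    have hlen' : (L.drop (f + i)).length = L.length - (f + i) := List.length_drop
    omega

lemma trim_card (f : ℕ) (U B : Multiset ℝ)
    (hUc : 2 * f + 1 ≤ Multiset.card U) (hB : Multiset.card B ≤ f) :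
    Multiset.card (trim f (U + B)) = Multiset.card U + Multiset.card B - 2 * f := by
  have hlen : ((U + B).sort (· ≤ ·)).length = Multiset.card U + Multiset.card B := by
    simp [Multiset.length_sort]
  simp only [trim, Multiset.coe_card, List.length_take, List.length_drop, hlen,
    Multiset.card_add]
  omega

lemma mean_bounds (f : ℕ) (U B : Multiset ℝ) (hU : U ≠ 0)
    (hUc : 2 * f + 1 ≤ Multiset.card U) (hB : Multiset.card B ≤ f) :
    mmin U ≤ mean (trim f (U + B)) ∧ mean (trim f (U + B)) ≤ mmax U := by
  set R := trim f (U + B) with hR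
  have hcard : Multiset.card R = Multiset.card U + Multiset.card B - 2 * f :=
    trim_card f U B hUc hB
  have hpos : 0 < Multiset.card R := by omega
  have hposR : (0 : ℝ) < (Multiset.card R : ℝ) := by exact_mod_cast hpos
  have hb := trim_bounds f U B hU hUc hB
  have hlo : (Multiset.card R : ℝ) * mmin U ≤ R.sum := by
    have := Multiset.card_nsmul_le_sum (s := R) (a := mmin U)
      (fun x hx => (hb x hx).1)
    simpa [nsmul_eq_mul] using this
  have hhi : R.sum ≤ (Multiset.card R : ℝ) * mmax U := by
    have := Multiset.sum_le_card_nsmul R (mmax U) (fun x hx => (hb x hx).2)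
    simpa [nsmul_eq_mul] using this
  constructor
  · rw [mean, le_div_iff₀ hposR]; linarith
  · rw [mean, div_le_iff₀ hposR]; linarith

/-- Once the non-faulty values are within `ε` of each other, the trimmed means
computed by any two correct processes remain within `ε` of each other. -/
theorem trim_mean_preserves_agreement (f : ℕ) (U B₁ B₂ : Multiset ℝ)
    (hU : U ≠ 0) (hUc : 2 * f + 1 ≤ Multiset.card U)
    (hB₁ : Multiset.card B₁ ≤ f) (hB₂ : Multiset.card B₂ ≤ f) :
    |mean (trim f (U + B₁)) - mean (trim f (U + B₂))| ≤ mmax U - mmin U ∧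
    (∀ ε > (0 : ℝ), mmax U - mmin U ≤ ε →
      |mean (trim f (U + B₁)) - mean (trim f (U + B₂))| ≤ ε) := by
  obtain ⟨h1l, h1u⟩ := mean_bounds f U B₁ hU hUc hB₁
  obtain ⟨h2l, h2u⟩ := mean_bounds f U B₂ hU hUc hB₂
  have key : |mean (trim f (U + B₁)) - mean (trim f (U + B₂))| ≤ mmax U - mmin U := by
    rw [abs_le]; constructor <;> linarith
  exact ⟨key, fun ε _ hε => key.trans hε⟩
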